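/- arXiv:2601.18605 — 2 statements merged into one kernel-verified Lean document; each statement's English description precedes it below -/
import Mathlib

section
/- Let X be a compact Hausdorff topological space, let W₁, W₂ ⊆ X be nonempty disjoint compact subsets, and let F : X → X be a continuous map such that F(W₁) ⊇ W₁ ∪ W₂ and F(W₂) ⊇ W₁ ∪ W₂. Then the set Λ = {x ∈ X : F^n(x) ∈ W₁ ∪ W₂ for all n ≥ 0} is uncountable; more precisely, for every sequence s ∈ {1,2}^ℕ there exists x ∈ Λ with F^n(x) ∈ W_{s(n)} for all n ≥ 0. -/
private lemma nat_bool_uncountable : ¬ Countable (ℕ → Bool) := by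
  intro h
  have e : Set ℕ ≃ (ℕ → Bool) := Equiv.arrowCongr (Equiv.refl ℕ) Equiv.propEquivBool
  have : Countable (Set ℕ) := Countable.of_equiv _ e.symm
  obtain ⟨f, hf⟩ := exists_injective_nat (Set ℕ)
  exact Function.cantor_injective f hf

/-- Abstract horseshoe: if `F(W₁) ⊇ W₁ ∪ W₂` and `F(W₂) ⊇ W₁ ∪ W₂` for nonempty disjoint
compact sets in a compact Hausdorff space, then every symbol sequence is realized by an
orbit, and the non-escaping set is uncountable. -/
theorem horseshoe_uncountable {X : Type*} [TopologicalSpace X] [CompactSpace X] [T2Space X]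
    (F : X → X) (hF : Continuous F) (W₁ W₂ : Set X)
    (h1c : IsCompact W₁) (h2c : IsCompact W₂)
    (h1ne : W₁.Nonempty) (h2ne : W₂.Nonempty)
    (hdisj : Disjoint W₁ W₂)
    (hcov1 : W₁ ∪ W₂ ⊆ F '' W₁) (hcov2 : W₁ ∪ W₂ ⊆ F '' W₂) :
    (∀ s : ℕ → Bool, ∃ x : X, ∀ n : ℕ, F^[n] x ∈ (if s n then W₁ else W₂)) ∧
    ¬ ({x : X | ∀ n : ℕ, F^[n] x ∈ W₁ ∪ W₂}).Countable := by
  set W : Bool → Set X := fun b => if b then W₁ else W₂ with hW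
  have hWc : ∀ b, IsCompact (W b) := by rintro (_|_) <;> simpa [hW]
  have hWne : ∀ b, (W b).Nonempty := by rintro (_|_) <;> simpa [hW]
  have hWsub : ∀ b, W b ⊆ W₁ ∪ W₂ := by
    rintro (_|_) <;> simp [hW, Set.subset_union_left, Set.subset_union_right]
  have hWcov : ∀ b, W₁ ∪ W₂ ⊆ F '' W b := by
    rintro (_|_) <;> simp only [hW, if_true, if_false]
    exacts [hcov2, hcov1]
  -- finite realizability
  have key : ∀ n : ℕ, ∀ s : ℕ → Bool, ∃ x ∈ W (s 0), ∀ k < n, F^[k] x ∈ W (s k) := by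
    intro n
    induction n with
    | zero => intro s; obtain ⟨x, hx⟩ := hWne (s 0); exact ⟨x, hx, by omega⟩
    | succ n ih =>
      intro s
      obtain ⟨y, hy0, hy⟩ := ih (fun k => s (k + 1))
      obtain ⟨x, hx, hfx⟩ := hWcov (s 0) (hWsub _ hy0)
      refine ⟨x, hx, ?_⟩
      intro k hk
      cases k with
      | zero => simpa using hx
      | succ j =>
        have : F^[j + 1] x = F^[j] y := by
          rw [Function.iterate_succ_apply, hfx]
        rw [this]
        exact hy j (by omega)
  -- realizing a full sequence by compactness
  have main : ∀ s : ℕ → Bool, ∃ x : X, ∀ n : ℕ, F^[n] x ∈ W (s n) := by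
    intro s
    set K : ℕ → Set X := fun n => ⋂ k ∈ Set.Iic n, (F^[k]) ⁻¹' W (s k) with hK
    have hKclosed : ∀ n, IsClosed (K n) := by
      intro n
      refine isClosed_biInter fun k _ => ?_
      exact ((hWc (s k)).isClosed).preimage (hF.iterate k)
    have hKmono : ∀ n, K (n + 1) ⊆ K n := by
      intro n x hx
      simp only [hK, Set.mem_iInter] at hx ⊢
      intro k hk
      exact hx k (le_trans hk (Nat.le_succ n))
    have hKne : ∀ n, (K n).Nonempty := by
      intro n
      obtain ⟨x, _, hx⟩ := key (n + 1) s
      refine ⟨x, ?_⟩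
      simp only [hK, Set.mem_iInter]
      intro k hk
      exact hx k (by simpa using Nat.lt_succ_of_le hk)
    have hK0c : IsCompact (K 0) := by
      have hsub : K 0 ⊆ W (s 0) := by
        intro x hx
        simp only [hK, Set.mem_iInter] at hx
        simpa using hx 0 Set.self_mem_Iic
      exact (hWc (s 0)).of_isClosed_subset (hKclosed 0) hsub
    obtain ⟨x, hx⟩ := IsCompact.nonempty_iInter_of_sequence_nonempty_isCompact_isClosed
      K hKmono hKne hK0c hKclosed
    refine ⟨x, fun n => ?_⟩
    have := Set.mem_iInter.1 hx n
    simp only [hK, Set.mem_iInter] at this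
    exact this n Set.self_mem_Iic
  refine ⟨main, ?_⟩
  intro hcount
  -- build an injection from sequences into the non-escaping set
  choose g hg using main
  have hginj : Function.Injective g := by
    intro s t hst
    funext n
    have hs := hg s n
    have ht := hg t n
    rw [hst] at hs
    by_contra hne
    cases hsn : s n <;> cases htn : t n <;> simp_all [hW]
    · exact hdisj.ne_of_mem ht hs rfl
    · exact hdisj.ne_of_mem hs ht rfl
  have hrange : ∀ s, g s ∈ {x : X | ∀ n : ℕ, F^[n] x ∈ W₁ ∪ W₂} :=
    fun s n => hWsub _ (hg s n)
  have : Countable (ℕ → Bool) := by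
    have := hcount.to_subtype
    exact Function.Injective.countable (f := fun s => (⟨g s, hrange s⟩ :
      {x : X | ∀ n : ℕ, F^[n] x ∈ W₁ ∪ W₂})) (fun a b h => hginj (congrArg Subtype.val h))
  exact nat_bool_uncountable this
end

section
/- Let A and B be nonempty finite subsets of the unit circle S¹ ⊆ ℝ². Suppose A and B are unlinked: there exist two disjoint closed arcs I_A and I_B of S¹ with A ⊆ I_A and B ⊆ I_B. Then the convex hulls of A and of B (taken in ℝ²) are disjoint. -/
open Complex Real Set

lemma cos_lt_of_ne (δ s : ℝ) (h0 : 0 ≤ δ) (h1 : δ < s) (h2 : s < 2 * π - δ) :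
    Real.cos s < Real.cos δ := by
  rcases le_or_gt s π with hs | hs
  · exact Real.cos_lt_cos_of_nonneg_of_le_pi h0 hs h1
  · have : Real.cos s = Real.cos (2 * π - s) := by
      rw [Real.cos_sub]; simp [Real.cos_two_pi, Real.sin_two_pi]
    rw [this]
    exact Real.cos_lt_cos_of_nonneg_of_le_pi h0 (by linarith) (by linarith)

lemma key (A B : Set ℂ) (hAfin : A.Finite) (hBfin : B.Finite)
    (hAne : A.Nonempty) (hBne : B.Nonempty)
    (hA : A ⊆ Metric.sphere (0 : ℂ) 1) (hB : B ⊆ Metric.sphere (0 : ℂ) 1)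
    (IA IB : Set ℂ) (hIA : IA ⊆ Metric.sphere (0 : ℂ) 1)
    (hIB : IB ⊆ Metric.sphere (0 : ℂ) 1)
    (hIBpc : IsPreconnected IB) (hdisj : Disjoint IA IB)
    (hAIA : A ⊆ IA) (hBIB : B ⊆ IB) :
    Disjoint (convexHull ℝ A) (convexHull ℝ B) := by
  obtain ⟨a₀, ha₀A⟩ := hAne
  have ha₀ : ‖a₀‖ = 1 := by
    have := hA ha₀A; simpa [Complex.dist_eq] using this
  have hnorm : ((‖a₀‖ : ℂ))^2 = 1 := by
    rw [ha₀]; norm_num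
  set θ : ℂ → ℝ := fun x => Complex.arg (-x * (starRingEnd ℂ) a₀) with hθ
  have habs : ∀ x : ℂ, ‖x‖ = 1 → ‖-x * (starRingEnd ℂ) a₀‖ = 1 := by
    intro x hx; simp [map_mul, hx, ha₀]
  have hrepr : ∀ x : ℂ, ‖x‖ = 1 → -x * (starRingEnd ℂ) a₀ = Complex.exp (θ x * Complex.I) := by
    intro x hx
    have := Complex.norm_mul_exp_arg_mul_I (-x * (starRingEnd ℂ) a₀)
    rw [habs x hx] at this
    simpa [hθ] using this.symm
  have hinj : ∀ x y : ℂ, ‖x‖ = 1 → ‖y‖ = 1 → θ x = θ y → x = y := by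
    intro x y hx hy hxy
    have h1 := hrepr x hx
    have h2 := hrepr y hy
    rw [hxy, ← h2] at h1
    have : (starRingEnd ℂ) a₀ ≠ 0 := by
      simp only [ne_eq, map_eq_zero]; intro h; rw [h] at ha₀; simp at ha₀
    have := mul_right_cancel₀ this h1
    exact neg_injective this
  have hθpi : ∀ x : ℂ, ‖x‖ = 1 → (θ x = π ↔ x = a₀) := by
    intro x hx
    constructor
    · intro h
      have h2 := hrepr x hx
      rw [h] at h2
      have h3 : -x * (starRingEnd ℂ) a₀ = -1 := by
        rw [h2]; simp [Complex.exp_mul_I]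
      have hx2 : x * (starRingEnd ℂ) a₀ = 1 := by
        have := congrArg Neg.neg h3; simpa using this
      have h4 : x * ((starRingEnd ℂ) a₀ * a₀) = a₀ := by rw [← mul_assoc, hx2, one_mul]
      rwa [Complex.conj_mul', hnorm, mul_one] at h4
    · intro h
      subst h
      have h3 : -x * (starRingEnd ℂ) x = -1 := by
        rw [neg_mul, Complex.mul_conj', hnorm]
      simp only [hθ, h3, Complex.arg_neg_one]
  -- continuity away from a₀
  have hcont : ∀ x : ℂ, ‖x‖ = 1 → x ≠ a₀ → ContinuousAt θ x := by
    intro x hx hxa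
    have hslit : -x * (starRingEnd ℂ) a₀ ∈ Complex.slitPlane := by
      rw [Complex.mem_slitPlane_iff]
      by_contra hc
      push_neg at hc
      obtain ⟨h1, h2⟩ := hc
      -- -x * conj a₀ is real with re ≤ 0 and abs 1, so = -1
      set z := -x * (starRingEnd ℂ) a₀ with hz
      have hz1 : ‖z‖ = 1 := habs x hx
      have hzre : z = (z.re : ℂ) := by
        exact (Complex.re_add_im z ▸ by rw [h2]; simp)
      have : z = -1 := by
        rw [hzre]
        have : |z.re| = 1 := by
          have := hz1; rw [hzre] at this; simpa using this
        rcases abs_eq (by norm_num : (0:ℝ) ≤ 1) |>.mp this with h | h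
        · exfalso; linarith
        · rw [h]; norm_num
      have hx2 : x * (starRingEnd ℂ) a₀ = 1 := by
        have := congrArg Neg.neg this; simpa [hz] using this
      have h4 : x * ((starRingEnd ℂ) a₀ * a₀) = a₀ := by rw [← mul_assoc, hx2, one_mul]
      rw [Complex.conj_mul', hnorm, mul_one] at h4
      exact hxa h4
    have hg : ContinuousAt (fun y : ℂ => -y * (starRingEnd ℂ) a₀) x := by fun_prop
    have : ContinuousAt (Complex.arg ∘ fun y : ℂ => -y * (starRingEnd ℂ) a₀) x :=
      ContinuousAt.comp (Complex.continuousAt_arg hslit) hg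
    exact this
  -- min and max of θ on B
  obtain ⟨b₁, hb₁B, hb₁min⟩ := Set.exists_min_image B θ hBfin hBne
  obtain ⟨b₂, hb₂B, hb₂max⟩ := Set.exists_max_image B θ hBfin hBne
  set m := θ b₁ with hm
  set M := θ b₂ with hM
  have hsphere_abs : ∀ x : ℂ, x ∈ Metric.sphere (0:ℂ) 1 → ‖x‖ = 1 := by
    intro x hx; simpa [Complex.dist_eq] using hx
  have ha₀IA : a₀ ∈ IA := hAIA ha₀A
  have ha₀nIB : a₀ ∉ IB := fun h => (hdisj.ne_of_mem ha₀IA h) rfl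
  have hBne_a₀ : ∀ b ∈ IB, b ≠ a₀ := fun b hb h => ha₀nIB (h ▸ hb)
  have hθlt : ∀ b ∈ IB, θ b < π := by
    intro b hb
    rcases lt_or_eq_of_le (Complex.arg_le_pi (-b * (starRingEnd ℂ) a₀)) with h | h
    · exact h
    · exact absurd ((hθpi b (hsphere_abs b (hIB hb))).mp h) (hBne_a₀ b hb)
  have hθgt : ∀ x : ℂ, -π < θ x := fun x => Complex.neg_pi_lt_arg _
  have hmM : m ≤ M := hb₁min b₂ hb₂B
  have hmgt : -π < m := hθgt b₁
  have hMlt : M < π := hθlt b₂ (hBIB hb₂B)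
  -- θ '' IB is ord-connected, contains Icc m M
  have hcontOn : ContinuousOn θ IB := fun x hx =>
    (hcont x (hsphere_abs x (hIB hx)) (hBne_a₀ x hx)).continuousWithinAt
  have hIcc : Icc m M ⊆ θ '' IB := by
    have hpc : IsPreconnected (θ '' IB) := hIBpc.image θ hcontOn
    have : (θ '' IB).OrdConnected := hpc.ordConnected
    exact this.out ⟨b₁, hBIB hb₁B, rfl⟩ ⟨b₂, hBIB hb₂B, rfl⟩
  -- every a in A has θ a outside [m, M]
  have hAout : ∀ a ∈ A, θ a ∉ Icc m M := by
    intro a haA hmem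
    rcases eq_or_ne a a₀ with rfl | hne
    · have : θ a = π := (hθpi a (hsphere_abs a (hA haA))).mpr rfl
      rw [this] at hmem
      exact absurd hmem.2 (not_le.mpr hMlt)
    · obtain ⟨y, hyIB, hy⟩ := hIcc hmem
      have : y = a := hinj y a (hsphere_abs y (hIB hyIB)) (hsphere_abs a (hA haA)) hy
      subst this
      exact (hdisj.ne_of_mem (hAIA haA) hyIB) rfl
  -- the separating functional
  set μ := (m + M) / 2 with hμ
  set δ := (M - m) / 2 with hδ
  have hδ0 : 0 ≤ δ := by rw [hδ]; linarith
  have hδπ : δ < π := by rw [hδ]; linarith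
  set w : ℂ := -(starRingEnd ℂ) a₀ * Complex.exp (-μ * Complex.I) with hw
  set f : ℂ → ℝ := fun x => (x * w).re with hf
  have hflin : IsLinearMap ℝ f := by
    constructor
    · intro x y; simp [hf, add_mul]; ring
    · intro c x; simp [hf, Complex.smul_re, smul_mul_assoc]; ring
  have hfval : ∀ x : ℂ, ‖x‖ = 1 → f x = Real.cos (θ x - μ) := by
    intro x hx
    have h1 : x * w = Complex.exp ((θ x - μ : ℝ) * Complex.I) := by
      rw [hw, ← mul_assoc]
      have : x * -(starRingEnd ℂ) a₀ = -x * (starRingEnd ℂ) a₀ := by ring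
      rw [this, hrepr x hx, ← Complex.exp_add]
      congr 1
      push_cast
      ring
    rw [hf]
    simp only [h1]
    exact Complex.exp_ofReal_mul_I_re _
  have hBge : ∀ b ∈ B, Real.cos δ ≤ f b := by
    intro b hbB
    rw [hfval b (hsphere_abs b (hB hbB))]
    have h1 : |θ b - μ| ≤ δ := by
      rw [abs_le]
      constructor
      · have := hb₁min b hbB; rw [hμ, hδ]; linarith
      · have := hb₂max b hbB; rw [hμ, hδ]; linarith
    calc Real.cos δ ≤ Real.cos |θ b - μ| :=
          Real.cos_le_cos_of_nonneg_of_le_pi (abs_nonneg _) (le_of_lt hδπ) h1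
      _ = Real.cos (θ b - μ) := Real.cos_abs _
  have hAlt : ∀ a ∈ A, f a < Real.cos δ := by
    intro a haA
    rw [hfval a (hsphere_abs a (hA haA))]
    have hout := hAout a haA
    rw [mem_Icc, not_and_or, not_le, not_le] at hout
    have hπ : θ a ≤ π := Complex.arg_le_pi _
    have hπ' : -π < θ a := hθgt a
    rcases hout with h | h
    · -- θ a < m : use cos(s) = cos(-s)
      rw [← Real.cos_neg]
      apply cos_lt_of_ne δ _ hδ0
      · rw [hμ, hδ]; linarith
      · rw [hμ, hδ]; linarith
    · apply cos_lt_of_ne δ _ hδ0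
      · rw [hμ, hδ]; linarith
      · rw [hμ, hδ]; linarith
  -- conclude
  have hhullA : convexHull ℝ A ⊆ {x | f x < Real.cos δ} :=
    convexHull_min hAlt (convex_halfSpace_lt hflin _)
  have hhullB : convexHull ℝ B ⊆ {x | Real.cos δ ≤ f x} :=
    convexHull_min hBge (convex_halfSpace_ge hflin _)
  rw [Set.disjoint_left]
  intro x hxA hxB
  have h1 : f x < Real.cos δ := hhullA hxA
  have h2 : Real.cos δ ≤ f x := hhullB hxB
  linarith

/-- Unlinked finite subsets of the unit circle (contained in two disjoint closed arcs)
have disjoint convex hulls. -/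
theorem unlinked_convex_hulls_disjoint
    (A B : Set (EuclideanSpace ℝ (Fin 2)))
    (hAfin : A.Finite) (hBfin : B.Finite)
    (hAne : A.Nonempty) (hBne : B.Nonempty)
    (hA : A ⊆ Metric.sphere (0 : EuclideanSpace ℝ (Fin 2)) 1)
    (hB : B ⊆ Metric.sphere (0 : EuclideanSpace ℝ (Fin 2)) 1)
    (hunlinked : ∃ IA IB : Set (EuclideanSpace ℝ (Fin 2)),
      IA ⊆ Metric.sphere (0 : EuclideanSpace ℝ (Fin 2)) 1 ∧
      IB ⊆ Metric.sphere (0 : EuclideanSpace ℝ (Fin 2)) 1 ∧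
      IsClosed IA ∧ IsClosed IB ∧ IsPreconnected IA ∧ IsPreconnected IB ∧
      Disjoint IA IB ∧ A ⊆ IA ∧ B ⊆ IB) :
    Disjoint (convexHull ℝ A) (convexHull ℝ B) := by
  obtain ⟨IA, IB, hIA, hIB, _, _, _, hIBpc, hdisj, hAIA, hBIB⟩ := hunlinked
  set e : EuclideanSpace ℝ (Fin 2) ≃ₗᵢ[ℝ] ℂ := Complex.orthonormalBasisOneI.repr.symm with he
  have hsph : ∀ (s : Set (EuclideanSpace ℝ (Fin 2))),
      s ⊆ Metric.sphere (0 : EuclideanSpace ℝ (Fin 2)) 1 →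
      (⇑e '' s) ⊆ Metric.sphere (0 : ℂ) 1 := by
    intro s hs x hx
    obtain ⟨y, hy, rfl⟩ := hx
    have := hs hy
    simp only [mem_sphere_iff_norm, sub_zero] at this ⊢
    rw [e.norm_map]; exact this
  have hkey := key (⇑e '' A) (⇑e '' B) (hAfin.image _) (hBfin.image _)
    (hAne.image _) (hBne.image _) (hsph A hA) (hsph B hB)
    (⇑e '' IA) (⇑e '' IB) (hsph IA hIA) (hsph IB hIB)
    (hIBpc.image _ e.continuous.continuousOn)
    ((Set.disjoint_image_iff e.injective).mpr hdisj)
    (Set.image_mono hAIA) (Set.image_mono hBIB)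
  have himg : ∀ s : Set (EuclideanSpace ℝ (Fin 2)),
      ⇑e '' convexHull ℝ s = convexHull ℝ (⇑e '' s) := by
    intro s
    have h := LinearMap.image_convexHull (e.toLinearEquiv.toLinearMap : EuclideanSpace ℝ (Fin 2) →ₗ[ℝ] ℂ) s
    have hcoe : ⇑(e.toLinearEquiv.toLinearMap : EuclideanSpace ℝ (Fin 2) →ₗ[ℝ] ℂ) = ⇑e := rfl
    rwa [hcoe] at h
  rw [← himg A, ← himg B] at hkey
  exact (Set.disjoint_image_iff e.injective).mp hkey
end
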